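/- Let k be a field of characteristic different from 2 and n ≥ 2 an integer such that for every nonzero vector (x₁,…,x_{n−1}) ∈ k^{n−1}, the element x₁² + … + x_{n−1}² is a nonzero square in k. Let Q(x₀,…,x_n) = x₀x_n − x₁² − … − x_{n−1}² on k^{n+1}. Then for every nonzero v = (v₀,…,v_n) ∈ k^{n+1} with Q(v) = 0 there exists α ∈ kˣ such that v₀ and v_n each lie in α·(kˣ)² ∪ {0}; moreover α is unique up to multiplication by a nonzero square: if α' ∈ kˣ also has this property then α/α' ∈ (kˣ)². (Hence the punctured isotropic cone is the disjoint union of the semi-cones C_ᾱ indexed by the square classes ᾱ ∈ kˣ/(kˣ)².) -/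

import Mathlib

theorem stmt_7 {k : Type*} [Field k] (hchar : ringChar k ≠ 2)
    (n : ℕ) (hn : 2 ≤ n)
    (hsq : ∀ w : Fin (n - 1) → k, w ≠ 0 → ∃ c : k, c ≠ 0 ∧ (∑ i, w i ^ 2) = c ^ 2)
    (v0 vn : k) (w : Fin (n - 1) → k)
    (hne : ¬ (v0 = 0 ∧ vn = 0 ∧ w = 0))
    (hQ : v0 * vn - ∑ i, w i ^ 2 = 0) :
    ∃ α : k, α ≠ 0 ∧
      (v0 = 0 ∨ ∃ c : k, c ≠ 0 ∧ v0 = α * c ^ 2) ∧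
      (vn = 0 ∨ ∃ c : k, c ≠ 0 ∧ vn = α * c ^ 2) ∧
      ∀ α' : k, α' ≠ 0 →
        (v0 = 0 ∨ ∃ c : k, c ≠ 0 ∧ v0 = α' * c ^ 2) →
        (vn = 0 ∨ ∃ c : k, c ≠ 0 ∧ vn = α' * c ^ 2) →
        ∃ c : k, c ≠ 0 ∧ α = α' * c ^ 2 := by
  by_cases hw : w = 0
  · have hsum : (∑ i, w i ^ 2) = 0 := by subst hw; simp
    rw [hsum, sub_zero] at hQ
    rcases mul_eq_zero.mp hQ with h0 | h0
    · have hvn : vn ≠ 0 := fun h => hne ⟨h0, h, hw⟩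
      refine ⟨vn, hvn, Or.inl h0, Or.inr ⟨1, one_ne_zero, by ring⟩, ?_⟩
      intro α' hα' _ h2
      rcases h2 with h | ⟨c, hc, hcc⟩
      · exact absurd h hvn
      · exact ⟨c, hc, hcc⟩
    · have hv0 : v0 ≠ 0 := fun h => hne ⟨h, h0, hw⟩
      refine ⟨v0, hv0, Or.inr ⟨1, one_ne_zero, by ring⟩, Or.inl h0, ?_⟩
      intro α' hα' h1 _
      rcases h1 with h | ⟨c, hc, hcc⟩
      · exact absurd h hv0
      · exact ⟨c, hc, hcc⟩
  · obtain ⟨c, hc, hcc⟩ := hsq w hw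
    rw [hcc] at hQ
    have key : v0 * vn = c ^ 2 := by linear_combination hQ
    have hv0 : v0 ≠ 0 := by
      intro h; apply hc; have : c ^ 2 = 0 := by rw [← key, h, zero_mul]
      exact pow_eq_zero_iff (by norm_num) |>.mp this
    have hvn : vn ≠ 0 := by
      intro h; apply hc; have : c ^ 2 = 0 := by rw [← key, h, mul_zero]
      exact pow_eq_zero_iff (by norm_num) |>.mp this
    refine ⟨v0, hv0, Or.inr ⟨1, one_ne_zero, by ring⟩,
      Or.inr ⟨c / v0, div_ne_zero hc hv0, by field_simp; linear_combination key⟩, ?_⟩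
    intro α' hα' h1 _
    rcases h1 with h | ⟨d, hd, hdd⟩
    · exact absurd h hv0
    · exact ⟨d, hd, hdd⟩
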